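/- Let m be real with −2 ≤ m ≤ 2 and define the Curnier–Zysset scale function E : (0,∞) → ℝ by E(λ) := ((2+m)/8) λ² − ((2−m)/8) λ^{−2} − m/4. Then: (i) E(1) = 0; (ii) E'(1) = 1; (iii) E'(λ) > 0 for all λ > 0. Moreover, if −2 < m < 2, then E is coercive: E(λ) → +∞ as λ → ∞ and E(λ) → −∞ as λ → 0⁺. -/

import Mathlib

open Filter Topology

/-- The Curnier–Zysset scale function `E(λ) = ((2+m)/8) λ² − ((2−m)/8) λ^{−2} − m/4`. -/
noncomputable def CZscale (m : ℝ) (x : ℝ) : ℝ :=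
  (2 + m) / 8 * x ^ 2 - (2 - m) / 8 * x ^ (-2 : ℤ) - m / 4

lemma CZ_hasDerivAt (m x : ℝ) (hx : x ≠ 0) :
    HasDerivAt (CZscale m) ((2 + m) / 4 * x + (2 - m) / 4 * x ^ (-3 : ℤ)) x := by
  have h1 : HasDerivAt (fun x : ℝ => x ^ 2) (2 * x ^ 1) x := by
    simpa using hasDerivAt_pow 2 x
  have h2 : HasDerivAt (fun x : ℝ => x ^ (-2 : ℤ)) ((-2 : ℤ) * x ^ (-2 - 1 : ℤ)) x :=
    hasDerivAt_zpow (-2) x (Or.inl hx)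
  have := ((h1.const_mul ((2 + m) / 8)).sub (h2.const_mul ((2 - m) / 8))).sub_const (m / 4)
  convert this using 1
  case e'_4 => rfl
  case e'_5 => rfl
  case e'_8 => rfl
  have : (-2 - 1 : ℤ) = -3 := by norm_num
  rw [this]; ring

/-- For `−2 ≤ m ≤ 2`, the Curnier–Zysset scale function vanishes at
`1` with derivative `1` there and has everywhere positive derivative on `(0,∞)`;
moreover, for `−2 < m < 2` it is coercive. -/
theorem CZscale_properties (m : ℝ) (hm₁ : -2 ≤ m) (hm₂ : m ≤ 2) :
    CZscale m 1 = 0 ∧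
    deriv (CZscale m) 1 = 1 ∧
    (∀ x : ℝ, 0 < x → DifferentiableAt ℝ (CZscale m) x) ∧
    (∀ x : ℝ, 0 < x → 0 < deriv (CZscale m) x) ∧
    (-2 < m → m < 2 →
      Tendsto (CZscale m) atTop atTop ∧ Tendsto (CZscale m) (𝓝[>] (0 : ℝ)) atBot) := by
  refine ⟨?_, ?_, ?_, ?_, ?_⟩
  · simp [CZscale]; ring
  · have := (CZ_hasDerivAt m 1 one_ne_zero).deriv
    rw [this]; norm_num; linarith
  · exact fun x hx => (CZ_hasDerivAt m x hx.ne').differentiableAt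
  · intro x hx
    rw [(CZ_hasDerivAt m x hx.ne').deriv]
    have hx3 : (0:ℝ) < x ^ (-3 : ℤ) := zpow_pos hx _
    rcases lt_or_eq_of_le hm₁ with h | h
    · have t1 : 0 < (2 + m) / 4 * x := mul_pos (by linarith) hx
      have t2 : 0 ≤ (2 - m) / 4 * x ^ (-3 : ℤ) := by
        apply mul_nonneg (by linarith) hx3.le
      linarith
    · have : m = -2 := h.symm
      subst this
      norm_num
      positivity
  · intro h1 h2
    have ha : (0:ℝ) < (2 + m) / 8 := by linarith
    have hb : (0:ℝ) < (2 - m) / 8 := by linarith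
    constructor
    · have hsq : Tendsto (fun x : ℝ => (2 + m) / 8 * x ^ 2) atTop atTop :=
        (tendsto_pow_atTop two_ne_zero).const_mul_atTop ha
      have hz : Tendsto (fun x : ℝ => (2 - m) / 8 * x ^ (-2 : ℤ) + m / 4) atTop
          (𝓝 ((2 - m) / 8 * 0 + m / 4)) :=
        ((tendsto_zpow_atTop_zero (by norm_num)).const_mul _).add tendsto_const_nhds
      have key : Tendsto (fun x : ℝ => (2 + m) / 8 * x ^ 2 +
          -((2 - m) / 8 * x ^ (-2 : ℤ) + m / 4)) atTop atTop := hsq.atTop_add hz.neg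
      refine key.congr (fun x => by simp [CZscale]; ring)
    · have hinv : Tendsto (fun x : ℝ => x ^ (-2 : ℤ)) (𝓝[>] (0:ℝ)) atTop := by
        have : Tendsto (fun x : ℝ => x ^ 2) (𝓝[>] (0:ℝ)) (𝓝[>] (0:ℝ)) := by
          rw [tendsto_nhdsWithin_iff]
          constructor
          · have : Tendsto (fun x : ℝ => x ^ 2) (𝓝 (0:ℝ)) (𝓝 (0:ℝ)) := by
              simpa using (continuous_pow 2).tendsto (0:ℝ)
            exact this.mono_left nhdsWithin_le_nhds
          · filter_upwards [self_mem_nhdsWithin] with x hx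
            exact pow_pos (show (0:ℝ) < x from hx) 2
        have := tendsto_inv_nhdsGT_zero.comp this
        refine this.congr (fun x => ?_)
        simp [zpow_neg]
      have hbterm : Tendsto (fun x : ℝ => -((2 - m) / 8 * x ^ (-2 : ℤ))) (𝓝[>] (0:ℝ)) atBot := by
        have := hinv.const_mul_atTop hb
        exact tendsto_neg_atTop_atBot.comp this
      have hrest : Tendsto (fun x : ℝ => (2 + m) / 8 * x ^ 2 - m / 4) (𝓝[>] (0:ℝ))
          (𝓝 ((2 + m) / 8 * 0 ^ 2 - m / 4)) := by
        apply Tendsto.mono_left _ nhdsWithin_le_nhds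
        exact ((continuous_const.mul (continuous_pow 2)).sub continuous_const).tendsto 0
      have key2 : Tendsto (fun x : ℝ => -((2 - m) / 8 * x ^ (-2 : ℤ)) +
          ((2 + m) / 8 * x ^ 2 - m / 4)) (𝓝[>] (0:ℝ)) atBot :=
        hbterm.atBot_add hrest
      refine key2.congr (fun x => by simp [CZscale]; ring)
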